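/- Suppose V is infinite-dimensional. If X ∈ 𝒢 and Y is a hyperplane of X (i.e., Y ≤ X with dim(X/Y) = 1), then Y ∈ 𝒢. Moreover, for any X, Y ∈ 𝒢 with Y < X (strict inclusion), X and Y lie in different connected components of the Grassmann graph on 𝒢, i.e., there is no finite sequence X = Z₀, Z₁, …, Z_n = Y in 𝒢 with Z_{i-1} and Z_i adjacent for all i. -/

import Mathlib

open Submodule

/-- `X` belongs to the Grassmannian 𝒢: `X` is isomorphic (as a `K`-vector space)
to the quotient `V ⧸ X`, equivalently to one (hence every) complement of `X`. -/
def InG (K V : Type*) [DivisionRing K] [AddCommGroup V] [Module K V]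
    (X : Submodule K V) : Prop :=
  Nonempty (X ≃ₗ[K] (V ⧸ X))

/-- `quotRank K V A B` is the dimension of the quotient space `B / (A ∩ B)`,
where `A ∩ B` is viewed as a subspace of `B`.  For `A ≤ B` this is `dim (B/A)`. -/
noncomputable def quotRank (K V : Type*) [DivisionRing K] [AddCommGroup V] [Module K V]
    (A B : Submodule K V) : Cardinal :=
  Module.rank K (↥B ⧸ (A.comap B.subtype))

/-- `X` and `Y` are adjacent: `dim ((X+Y)/X) = dim ((X+Y)/Y) = 1`. -/
def Adjacent (K V : Type*) [DivisionRing K] [AddCommGroup V] [Module K V]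
    (X Y : Submodule K V) : Prop :=
  quotRank K V X (X ⊔ Y) = 1 ∧ quotRank K V Y (X ⊔ Y) = 1

/-- The distant graph on 𝒢: vertices are the elements of 𝒢, edges the pairs of
(distinct) complementary subspaces. -/
def distantGraph (K V : Type*) [DivisionRing K] [AddCommGroup V] [Module K V] :
    SimpleGraph {X : Submodule K V // InG K V X} where
  Adj X Y := X ≠ Y ∧ IsCompl X.1 Y.1
  symm := ⟨fun _ _ h => ⟨h.1.symm, h.2.symm⟩⟩
  loopless := ⟨fun _ h => h.1 rfl⟩

/-- The Grassmann graph on 𝒢: vertices are the elements of 𝒢, edges the pairs of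
adjacent subspaces. -/
def grassmannGraph (K V : Type*) [DivisionRing K] [AddCommGroup V] [Module K V] :
    SimpleGraph {X : Submodule K V // InG K V X} where
  Adj X Y := Adjacent K V X.1 Y.1
  symm := by
    constructor
    intro X Y h
    obtain ⟨h1, h2⟩ := h
    refine ⟨?_, ?_⟩ <;> rw [sup_comm]
    exacts [h2, h1]
  loopless := by
    constructor
    intro X h
    obtain ⟨h1, -⟩ := h
    rw [quotRank, sup_idem, comap_subtype_self] at h1
    have : Subsingleton (↥X.1 ⧸ (⊤ : Submodule K ↥X.1)) :=
      Submodule.Quotient.subsingleton_iff.mpr rfl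
    rw [rank_subsingleton'] at h1
    exact zero_ne_one h1

section Aux

open Cardinal

variable {K V : Type*} [DivisionRing K] [AddCommGroup V] [Module K V]

lemma comap_subtype_inf' (A B : Submodule K V) :
    (A ⊓ B).comap B.subtype = A.comap B.subtype := by
  ext ⟨x, hx⟩; simp [hx]

/-- `quotRank` depends only on `A ⊓ B`. -/
lemma quotRank_congr {A A' : Submodule K V} (B : Submodule K V) (h : A ⊓ B = A' ⊓ B) :
    quotRank K V A B = quotRank K V A' B := by
  unfold quotRank
  rw [← comap_subtype_inf' A B, h, comap_subtype_inf']

lemma quotRank_eq_zero_iff {A B : Submodule K V} : quotRank K V A B = 0 ↔ B ≤ A := by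
  rw [quotRank, rank_zero_iff, Submodule.Quotient.subsingleton_iff,
    comap_subtype_eq_top]

lemma quotRank_self (A : Submodule K V) : quotRank K V A A = 0 :=
  quotRank_eq_zero_iff.mpr le_rfl

/-- Second isomorphism theorem for `quotRank`. -/
lemma quotRank_sup (A B : Submodule K V) :
    quotRank K V B A = quotRank K V B (A ⊔ B) := by
  unfold quotRank
  rw [← comap_subtype_inf' B A, inf_comm]
  exact (LinearMap.quotientInfEquivSupQuotient A B).rank_eq.trans rfl

lemma rank_quot_tower' {p q : Submodule K V} (h : p ≤ q) :
    Module.rank K (V ⧸ p) = Module.rank K (V ⧸ q) + Module.rank K (↥q ⧸ (p.comap q.subtype)) := by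
  have e1 : ((V ⧸ p) ⧸ (q.map p.mkQ)) ≃ₗ[K] V ⧸ q := quotientQuotientEquivQuotient p q h
  have hker : LinearMap.ker (p.mkQ ∘ₗ q.subtype) = p.comap q.subtype := by
    rw [LinearMap.ker_comp, ker_mkQ]
  have hrange : LinearMap.range (p.mkQ ∘ₗ q.subtype) = q.map p.mkQ := by
    rw [LinearMap.range_comp, range_subtype]
  have e2 : (↥q ⧸ (p.comap q.subtype)) ≃ₗ[K] ↥(q.map p.mkQ) :=
    hker ▸ hrange ▸ (p.mkQ ∘ₗ q.subtype).quotKerEquivRange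
  have := rank_quotient_add_rank (q.map p.mkQ) (M := V ⧸ p)
  rw [e1.rank_eq, ← e2.rank_eq] at this
  exact this.symm

/-- Tower law for `quotRank`. -/
lemma quotRank_tower {A B C : Submodule K V} (hAB : A ≤ B) (hBC : B ≤ C) :
    quotRank K V A C = quotRank K V B C + quotRank K V A B := by
  have h : A.comap C.subtype ≤ B.comap C.subtype := comap_mono hAB
  have key := rank_quot_tower' (K := K) h
  have hmap : (((A.comap C.subtype)).comap (B.comap C.subtype).subtype).map
      ((comapSubtypeEquivOfLe hBC : (B.comap C.subtype) ≃ₗ[K] B) : (B.comap C.subtype) →ₗ[K] B) = A.comap B.subtype := by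
    ext x
    constructor
    · rintro ⟨y, hy, rfl⟩
      simpa using hy
    · intro hx
      exact ⟨⟨⟨x.1, hBC x.2⟩, x.2⟩, hx, Subtype.ext rfl⟩
  have e3 := Submodule.Quotient.equiv _ _
      (comapSubtypeEquivOfLe hBC : (B.comap C.subtype) ≃ₗ[K] B) hmap
  unfold quotRank
  rw [key, e3.rank_eq]

lemma quotRank_mono {A B' B : Submodule K V} (hB : B' ≤ B) :
    quotRank K V A B' ≤ quotRank K V A B := by
  have hle : A.comap B'.subtype ≤ (A.comap B.subtype).comap (inclusion hB) := by
    intro x hx; simpa using hx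
  let f := mapQ (A.comap B'.subtype) (A.comap B.subtype) (inclusion hB) hle
  have hinj : Function.Injective f := by
    rw [← LinearMap.ker_eq_bot]
    unfold f
    unfold Submodule.mapQ
    rw [ker_liftQ_eq_bot]
    intro x hx
    simpa using hx
  exact LinearMap.rank_le_of_injective f hinj

/-- The invariant `quotRank X Z = quotRank Z X < ℵ₀` is preserved by adjacency. -/
lemma invariant_step {X Z Z' : Submodule K V}
    (hn : quotRank K V X Z = quotRank K V Z X) (hfin : quotRank K V X Z < ℵ₀)
    (hadj : Adjacent K V Z Z') :
    quotRank K V X Z' = quotRank K V Z' X ∧ quotRank K V X Z' < ℵ₀ := by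
  have hZ'Z : quotRank K V Z' Z = 1 := (quotRank_sup Z Z').trans hadj.2
  have hZZ' : quotRank K V Z Z' = 1 :=
    (quotRank_sup Z' Z).trans (by rw [sup_comm]; exact hadj.1)
  set D : Submodule K V := X ⊓ Z ⊓ Z' with hD
  have hDXZ : D ≤ X ⊓ Z := inf_le_left
  have hDXZ' : D ≤ X ⊓ Z' := le_inf (inf_le_left.trans inf_le_left) inf_le_right
  have hDZZ' : D ≤ Z ⊓ Z' := le_inf (inf_le_left.trans inf_le_right) inf_le_right
  -- the various congruences
  have c1 : quotRank K V D (X ⊓ Z) = quotRank K V Z' (X ⊓ Z) :=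
    quotRank_congr _ (by rw [hD]; ext x; simp only [mem_inf]; tauto)
  have c2 : quotRank K V (X ⊓ Z) X = quotRank K V Z X :=
    quotRank_congr _ (by ext x; simp only [mem_inf]; tauto)
  have c3 : quotRank K V (X ⊓ Z) Z = quotRank K V X Z :=
    quotRank_congr _ (by ext x; simp only [mem_inf]; tauto)
  have c4 : quotRank K V (Z ⊓ Z') Z = quotRank K V Z' Z :=
    quotRank_congr _ (by ext x; simp only [mem_inf]; tauto)
  have c5 : quotRank K V (Z ⊓ Z') Z' = quotRank K V Z Z' :=
    quotRank_congr _ (by ext x; simp only [mem_inf]; tauto)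
  have c6 : quotRank K V (X ⊓ Z') Z' = quotRank K V X Z' :=
    quotRank_congr _ (by ext x; simp only [mem_inf]; tauto)
  have c7 : quotRank K V (X ⊓ Z') X = quotRank K V Z' X :=
    quotRank_congr _ (by ext x; simp only [mem_inf]; tauto)
  have t1 : quotRank K V D X = quotRank K V Z X + quotRank K V D (X ⊓ Z) := by
    rw [quotRank_tower hDXZ inf_le_left, c2]
  have t2 : quotRank K V D Z = quotRank K V X Z + quotRank K V D (X ⊓ Z) := by
    rw [quotRank_tower hDXZ inf_le_right, c3]
  have t3 : quotRank K V D Z = 1 + quotRank K V D (Z ⊓ Z') := by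
    rw [quotRank_tower hDZZ' inf_le_left, c4, hZ'Z]
  have t4 : quotRank K V D Z' = 1 + quotRank K V D (Z ⊓ Z') := by
    rw [quotRank_tower hDZZ' inf_le_right, c5, hZZ']
  have t5 : quotRank K V D Z' = quotRank K V X Z' + quotRank K V D (X ⊓ Z') := by
    rw [quotRank_tower hDXZ' inf_le_right, c6]
  have t6 : quotRank K V D X = quotRank K V Z' X + quotRank K V D (X ⊓ Z') := by
    rw [quotRank_tower hDXZ' inf_le_left, c7]
  -- finiteness
  have hefin : quotRank K V D (X ⊓ Z) ≤ 1 := by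
    rw [c1, ← hZ'Z]
    exact quotRank_mono inf_le_right
  have hafin : quotRank K V D X < ℵ₀ := by
    rw [t1, ← hn]
    exact Cardinal.add_lt_aleph0 hfin (hefin.trans_lt Cardinal.one_lt_aleph0)
  have hDZ' : quotRank K V D Z' = quotRank K V D X := by
    rw [t4, ← t3, t2, hn, ← t1]
  have hffin : quotRank K V D (X ⊓ Z') < ℵ₀ := by
    refine lt_of_le_of_lt ?_ hafin
    rw [← hDZ', t5]
    exact le_add_self
  have hmain : quotRank K V X Z' + quotRank K V D (X ⊓ Z')
      = quotRank K V Z' X + quotRank K V D (X ⊓ Z') := by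
    rw [← t5, hDZ', t6]
  refine ⟨Cardinal.eq_of_add_eq_add_right hmain hffin, ?_⟩
  refine lt_of_le_of_lt ?_ hafin
  rw [← hDZ', t5]
  exact self_le_add_right _ _

/-- A hyperplane of an element of 𝒢 is again in 𝒢 (when `V` is infinite-dimensional). -/
lemma hyperplane_mem_G (hV : ¬ FiniteDimensional K V) {X Y : Submodule K V}
    (hX : InG K V X) (hYX : Y ≤ X) (h1 : quotRank K V Y X = 1) : InG K V Y := by
  have hVr : ℵ₀ ≤ Module.rank K V :=
    le_of_not_gt fun h => hV (Module.rank_lt_aleph0_iff.mp h)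
  obtain ⟨eX⟩ := hX
  have hXr : Module.rank K ↥X = Module.rank K (V ⧸ X) := eX.rank_eq
  have hq : Module.rank K (V ⧸ X) + Module.rank K ↥X = Module.rank K V :=
    rank_quotient_add_rank X
  have hXinf : ℵ₀ ≤ Module.rank K ↥X := by
    by_contra h
    push_neg at h
    rw [← hq, ← hXr] at hVr
    exact absurd hVr (not_le.mpr (Cardinal.add_lt_aleph0 h h))
  have hYr : (1 : Cardinal) + Module.rank K ↥Y = Module.rank K ↥X := by
    have := rank_quotient_add_rank (Y.comap X.subtype) (M := ↥X)
    rw [show Module.rank K (↥X ⧸ Y.comap X.subtype) = quotRank K V Y X from rfl, h1,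
      (comapSubtypeEquivOfLe hYX).rank_eq] at this
    exact this
  have hYinf : ℵ₀ ≤ Module.rank K ↥Y := by
    by_contra h
    push_neg at h
    rw [← hYr] at hXinf
    exact absurd hXinf
      (not_le.mpr (Cardinal.add_lt_aleph0 Cardinal.one_lt_aleph0 h))
  have hYX' : Module.rank K ↥Y = Module.rank K ↥X := by
    rw [← hYr, Cardinal.add_eq_right hYinf (le_trans Cardinal.one_le_aleph0 hYinf)]
  have hquot : Module.rank K (V ⧸ Y) = Module.rank K (V ⧸ X) + 1 := by
    rw [rank_quot_tower' (K := K) hYX,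
      show Module.rank K (↥X ⧸ Y.comap X.subtype) = quotRank K V Y X from rfl, h1]
  have hfinal : Module.rank K ↥Y = Module.rank K (V ⧸ Y) := by
    rw [hquot, ← hXr, Cardinal.add_eq_left hXinf (le_trans Cardinal.one_le_aleph0 hXinf),
      hYX']
  exact LinearEquiv.nonempty_equiv_iff_rank_eq.mpr hfinal

end Aux

/-- For `V` infinite-dimensional: a hyperplane `Y` of an `X ∈ 𝒢` again lies in 𝒢,
and for `X, Y ∈ 𝒢` with `Y < X` the subspaces `X` and `Y` lie in different
connected components of the Grassmann graph (no finite path of adjacent elements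
of 𝒢 joins them). -/
theorem stmt_17 (K V : Type*) [DivisionRing K] [AddCommGroup V] [Module K V]
    (hV : ¬ FiniteDimensional K V) :
    (∀ X Y : Submodule K V, InG K V X → Y ≤ X → quotRank K V Y X = 1 → InG K V Y) ∧
    (∀ X Y : Submodule K V, (hX : InG K V X) → (hY : InG K V Y) → Y < X →
      ¬ (grassmannGraph K V).Reachable ⟨X, hX⟩ ⟨Y, hY⟩) := by
  constructor
  · intro X Y hX hYX h1
    exact hyperplane_mem_G hV hX hYX h1
  · intro X Y hX hY hlt hreach
    obtain ⟨w⟩ := hreach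
    have key : ∀ (u v : {Z : Submodule K V // InG K V Z}) (w : (grassmannGraph K V).Walk u v),
        (quotRank K V X u.1 = quotRank K V u.1 X ∧ quotRank K V X u.1 < Cardinal.aleph0) →
        (quotRank K V X v.1 = quotRank K V v.1 X ∧ quotRank K V X v.1 < Cardinal.aleph0) := by
      intro u v w
      induction w with
      | nil => exact id
      | cons h p ih => exact fun hu => ih (invariant_step hu.1 hu.2 h)
    have hbase : quotRank K V X X = quotRank K V X X ∧ quotRank K V X X < Cardinal.aleph0 :=
      ⟨rfl, by rw [quotRank_self]; exact Cardinal.aleph0_pos⟩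
    obtain ⟨hPY, -⟩ := key _ _ w hbase
    have h0 : quotRank K V X Y = 0 := quotRank_eq_zero_iff.mpr hlt.le
    rw [h0] at hPY
    exact hlt.not_ge (quotRank_eq_zero_iff.mp hPY.symm)
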